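/- arXiv:1909.11565 — 2 statements merged into one kernel-verified Lean document; each statement's English description precedes it below -/
import Mathlib

section
/- Let G=(V,E) be a distance-regular graph of vertex degree d and girth 4. Then for every edge {x,y}∈E, κ₀(x,y) = 0 and κ_LLY(x,y) = 2/d. -/
open Filter
open scoped Classical

variable {V : Type*}

/-- The probability measure `μ_x^p` with idleness parameter `p`, on a `d`-regular graph:
`μ_x^p(x) = p`, `μ_x^p(z) = (1-p)/d` for `z` adjacent to `x`, and `0` otherwise. -/
noncomputable def muMeasure (G : SimpleGraph V) (d : ℕ) (p : ℝ) (x : V) : V → ℝ :=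
  fun z => if z = x then p else if G.Adj x z then (1 - p) / d else 0

/-- `π` is a transport plan transporting `μ₁` to `μ₂`. -/
def IsTransportPlan (μ₁ μ₂ : V → ℝ) (π : V → V → ℝ) : Prop :=
  (∀ u v, 0 ≤ π u v) ∧ (∀ u, ∑' v, π u v = μ₁ u) ∧ (∀ v, ∑' u, π u v = μ₂ v)

/-- The cost of a transport plan: `∑_{u,v} d(u,v) π(u,v)`. -/
noncomputable def transportCost (G : SimpleGraph V) (π : V → V → ℝ) : ℝ :=
  ∑' q : V × V, (G.dist q.1 q.2 : ℝ) * π q.1 q.2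

/-- The Wasserstein distance `W₁(μ₁, μ₂)`: infimum of costs over all transport plans. -/
noncomputable def W1 (G : SimpleGraph V) (μ₁ μ₂ : V → ℝ) : ℝ :=
  sInf {c : ℝ | ∃ π, IsTransportPlan μ₁ μ₂ π ∧ transportCost G π = c}

/-- The `p`-Ollivier Ricci curvature `κ_p(x,y) = 1 - W₁(μ_x^p, μ_y^p)` in a `d`-regular graph. -/
noncomputable def kappa (G : SimpleGraph V) (d : ℕ) (p : ℝ) (x y : V) : ℝ :=
  1 - W1 G (muMeasure G d p x) (muMeasure G d p y)

/-- The Lin–Lu–Yau curvature `κ_LLY(x,y) = lim_{p→1} κ_p(x,y)/(1-p)`. -/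
noncomputable def kappaLLY (G : SimpleGraph V) (d : ℕ) (x y : V) : ℝ :=
  limUnder (nhdsWithin 1 (Set.Iio (1 : ℝ))) fun p => kappa G d p x y / (1 - p)

/-- A graph is distance-regular if `|S_r(x) ∩ S_t(y)|` depends only on `r`, `t` and
`d(x,y)`. -/
def IsDistanceRegular (G : SimpleGraph V) : Prop :=
  ∀ x y x' y' : V, G.dist x y = G.dist x' y' → ∀ r t : ℕ,
    {z | G.dist x z = r ∧ G.dist y z = t}.ncard = {z | G.dist x' z = r ∧ G.dist y' z = t}.ncard

namespace Stmt17Aux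

/-! ### Basic distance lemmas -/

lemma dist_two {G : SimpleGraph V} {a b c : V} (hne : a ≠ c) (hnadj : ¬ G.Adj a c)
    (h1 : G.Adj a b) (h2 : G.Adj b c) : G.dist a c = 2 := by
  have hle : G.dist a c ≤ 2 := by
    have := SimpleGraph.dist_le
      (SimpleGraph.Walk.cons h1 (SimpleGraph.Walk.cons h2 SimpleGraph.Walk.nil))
    simpa using this
  have h0 : G.dist a c ≠ 0 := by
    rw [SimpleGraph.dist_ne_zero_iff_ne_and_reachable]
    exact ⟨hne, ⟨SimpleGraph.Walk.cons h1 (SimpleGraph.Walk.cons h2 SimpleGraph.Walk.nil)⟩⟩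
  have h1' : G.dist a c ≠ 1 := by
    simpa [SimpleGraph.dist_eq_one_iff_adj] using hnadj
  omega

lemma penult {G : SimpleGraph V} (hconn : G.Connected) {x y : V} {n : ℕ}
    (h : G.dist x y = n + 1) : ∃ y', G.Adj y' y ∧ G.dist x y' = n := by
  have hr : G.Reachable x y := by
    apply SimpleGraph.Reachable.of_dist_ne_zero; omega
  obtain ⟨p, hp⟩ := hr.exists_walk_length_eq_dist
  rw [h] at hp
  have hp' : p.reverse.length = n + 1 := by simpa using hp
  cases hrev : p.reverse with
  | nil => rw [hrev] at hp'; simp at hp'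
  | cons hadj q =>
    rename_i y'
    rw [hrev] at hp'
    simp only [SimpleGraph.Walk.length_cons] at hp'
    have hq : q.length = n := by omega
    refine ⟨y', hadj.symm, ?_⟩
    have hle : G.dist x y' ≤ n := by
      have := SimpleGraph.dist_le q.reverse
      simpa [hq] using this
    have hge : n ≤ G.dist x y' := by
      have h2 := hconn.dist_triangle (u := x) (v := y') (w := y)
      rw [h, SimpleGraph.dist_eq_one_iff_adj.mpr hadj.symm] at h2
      omega
    omega

lemma ball_finite {G : SimpleGraph V} [G.LocallyFinite] (hconn : G.Connected) (x : V) :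
    ∀ n : ℕ, {y : V | G.dist x y ≤ n}.Finite := by
  intro n
  induction n with
  | zero =>
    apply Set.Finite.subset (Set.finite_singleton x)
    intro y hy
    simp only [Set.mem_setOf_eq, Nat.le_zero] at hy
    have := (hconn.dist_eq_zero_iff (u := x) (v := y)).mp hy
    simp [this]
  | succ n ih =>
    apply Set.Finite.subset (ih.union (Set.Finite.biUnion ih
      (fun z _ => (G.neighborSet z).toFinite)))
    intro y hy
    simp only [Set.mem_setOf_eq] at hy
    rcases Nat.lt_or_ge (G.dist x y) (n+1) with hlt | hge
    · left; simpa using Nat.lt_succ_iff.mp hlt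
    · have heq : G.dist x y = n + 1 := by omega
      obtain ⟨y', hadj, hy'⟩ := penult hconn heq
      right
      exact Set.mem_biUnion (by simp [hy']) hadj

/-! ### Girth consequences -/

lemma triangle_free {G : SimpleGraph V} (hg : G.girth = 4) :
    ∀ a b c : V, G.Adj a b → G.Adj b c → G.Adj a c → False := by
  intro a b c hab hbc hac
  set w := SimpleGraph.Walk.cons hab (SimpleGraph.Walk.cons hbc
      (SimpleGraph.Walk.cons hac.symm SimpleGraph.Walk.nil)) with hwdef
  have hw : w.IsCycle := by
    constructor
    · constructor
      · constructor
        simp [hwdef, SimpleGraph.Walk.edges, hab.ne, hbc.ne, hac.ne, hab.ne', hbc.ne', hac.ne']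
      · simp [hwdef]
    · simp [hwdef, SimpleGraph.Walk.support, hab.ne', hbc.ne, hac.ne']
  have h1 : G.egirth ≤ 3 := by
    refine iInf_le_of_le a (iInf_le_of_le w (iInf_le_of_le hw ?_))
    simp [hwdef]
  have h2 : G.girth ≤ 3 := by
    have := ENat.toNat_le_toNat h1 (by simp)
    simpa [SimpleGraph.girth] using this
  omega

lemma quadrangle {G : SimpleGraph V} (hg : G.girth = 4) :
    ∃ a b c e : V, G.Adj a b ∧ G.Adj b c ∧ G.Adj c e ∧ G.Adj e a ∧
      a ≠ b ∧ a ≠ c ∧ a ≠ e ∧ b ≠ c ∧ b ≠ e ∧ c ≠ e := by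
  have hac : ¬ G.IsAcyclic := by
    intro h
    rw [SimpleGraph.girth_eq_zero.mpr h] at hg
    omega
  obtain ⟨a, w, hw, hlen⟩ := SimpleGraph.exists_girth_eq_length.mpr hac
  rw [hg] at hlen
  cases w with
  | nil => simp at hlen
  | cons h1 w =>
  rename_i b
  cases w with
  | nil => simp at hlen
  | cons h2 w =>
  rename_i c
  cases w with
  | nil => simp at hlen
  | cons h3 w =>
  rename_i e
  cases w with
  | nil => simp at hlen
  | cons h4 w =>
  rename_i f
  cases w with
  | nil =>
    have hsup := hw.2
    simp [SimpleGraph.Walk.support] at hsup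
    exact ⟨a, b, c, e, h1, h2, h3, h4, by tauto, by tauto, by tauto, by tauto, by tauto, by tauto⟩
  | cons h5 w => simp [SimpleGraph.Walk.length_cons] at hlen

/-! ### Common neighbours -/

noncomputable def cn (G : SimpleGraph V) [G.LocallyFinite] (u v : V) : Finset V :=
  (G.neighborFinset u).filter (fun z => G.Adj v z)

section Terwilliger

variable {G : SimpleGraph V} [G.LocallyFinite] (hconn : G.Connected)
  (tf : ∀ a b c : V, G.Adj a b → G.Adj b c → G.Adj a c → False)
  {m : ℕ} (hm : ∀ u v : V, G.dist u v = 2 → (cn G u v).card = m) (hm2 : 2 ≤ m)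

include hconn tf hm hm2 in
lemma terwilliger_step {n : ℕ} {x y y' : V} (hxy : G.dist x y = n + 2) (hy'y : G.Adj y' y)
    (hxy' : G.dist x y' = n + 1) :
    ((G.neighborFinset y').filter (fun w => G.dist x w = n)).card + 1 ≤
      ((G.neighborFinset y).filter (fun w => G.dist x w = n + 1)).card := by
  set A := (G.neighborFinset y').filter (fun w => G.dist x w = n) with hA
  set C := (G.neighborFinset y).filter (fun w => G.dist x w = n + 1) with hC
  have hy'C : y' ∈ C := by
    simp only [hC, Finset.mem_filter, SimpleGraph.mem_neighborFinset]
    exact ⟨hy'y.symm, hxy'⟩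
  set C' := C.erase y' with hC'
  set T : V → Finset V := fun w => (cn G y w).erase y' with hT
  have hAfact : ∀ w ∈ A, G.Adj y' w ∧ G.dist x w = n := by
    intro w hw
    simp only [hA, Finset.mem_filter, SimpleGraph.mem_neighborFinset] at hw
    exact hw
  have hAdist : ∀ w ∈ A, G.dist y w = 2 := by
    intro w hw
    obtain ⟨h1, h2⟩ := hAfact w hw
    have hne : w ≠ y := by intro h; rw [h] at h2; omega
    have hnadj : ¬ G.Adj w y := by
      intro hadj
      have : G.dist x y ≤ G.dist x w + G.dist w y := hconn.dist_triangle
      rw [SimpleGraph.dist_eq_one_iff_adj.mpr hadj, h2, hxy] at this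
      omega
    rw [SimpleGraph.dist_comm]
    exact dist_two hne hnadj h1.symm hy'y
  have hTcard : ∀ w ∈ A, (T w).card = m - 1 := by
    intro w hw
    have hcn : (cn G y w).card = m := hm y w (hAdist w hw)
    have hy'mem : y' ∈ cn G y w := by
      simp only [cn, Finset.mem_filter, SimpleGraph.mem_neighborFinset]
      exact ⟨hy'y.symm, (hAfact w hw).1.symm⟩
    simp only [hT]
    rw [Finset.card_erase_of_mem hy'mem, hcn]
  have hTsub : ∀ w ∈ A, T w ⊆ C' := by
    intro w hw v hv
    obtain ⟨h1, h2⟩ := hAfact w hw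
    simp only [hT, cn, Finset.mem_erase, Finset.mem_filter,
      SimpleGraph.mem_neighborFinset] at hv
    obtain ⟨hvy', hyv, hwv⟩ := hv
    have hub : G.dist x v ≤ n + 1 := by
      have := hconn.dist_triangle (u := x) (v := w) (w := v)
      rw [h2, SimpleGraph.dist_eq_one_iff_adj.mpr hwv] at this
      omega
    have hlb : n + 2 ≤ G.dist x v + 1 := by
      have := hconn.dist_triangle (u := x) (v := v) (w := y)
      rw [hxy, SimpleGraph.dist_comm (u := v) (v := y),
        SimpleGraph.dist_eq_one_iff_adj.mpr hyv] at this
      omega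
    simp only [hC', hC, Finset.mem_erase, Finset.mem_filter, SimpleGraph.mem_neighborFinset]
    exact ⟨hvy', hyv, by omega⟩
  have hfibre : ∀ v ∈ C', (A.filter (fun w => v ∈ T w)).card ≤ m - 1 := by
    intro v hv
    simp only [hC', hC, Finset.mem_erase, Finset.mem_filter,
      SimpleGraph.mem_neighborFinset] at hv
    obtain ⟨hvy', hyv, hdxv⟩ := hv
    have hnadj : ¬ G.Adj v y' := by
      intro hadj
      exact tf v y' y hadj hy'y hyv.symm
    have hdvy' : G.dist v y' = 2 := dist_two hvy' hnadj hyv.symm hy'y.symm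
    have hcn : (cn G v y').card = m := hm v y' hdvy'
    have hymem : y ∈ cn G v y' := by
      simp only [cn, Finset.mem_filter, SimpleGraph.mem_neighborFinset]
      exact ⟨hyv.symm, hy'y⟩
    have hsub : A.filter (fun w => v ∈ T w) ⊆ (cn G v y').erase y := by
      intro w hw
      simp only [Finset.mem_filter] at hw
      obtain ⟨hwA, hvT⟩ := hw
      obtain ⟨h1, h2⟩ := hAfact w hwA
      simp only [hT, cn, Finset.mem_erase, Finset.mem_filter,
        SimpleGraph.mem_neighborFinset] at hvT
      simp only [cn, Finset.mem_erase, Finset.mem_filter, SimpleGraph.mem_neighborFinset]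
      refine ⟨by intro h; rw [h] at h2; omega, hvT.2.2.symm, h1⟩
    calc (A.filter (fun w => v ∈ T w)).card ≤ ((cn G v y').erase y).card :=
          Finset.card_le_card hsub
      _ = m - 1 := by rw [Finset.card_erase_of_mem hymem, hcn]
  have key : A.card * (m - 1) ≤ C'.card * (m - 1) := by
    calc A.card * (m - 1) = ∑ w ∈ A, (T w).card := by
          rw [Finset.sum_congr rfl hTcard, Finset.sum_const, smul_eq_mul]
      _ = ∑ w ∈ A, (C'.filter (fun v => v ∈ T w)).card := by
          refine Finset.sum_congr rfl fun w hw => ?_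
          congr 1
          rw [Finset.filter_mem_eq_inter, Finset.inter_eq_right.mpr (hTsub w hw)]
      _ = ∑ w ∈ A, ∑ v ∈ C', if v ∈ T w then 1 else 0 := by
          simp [Finset.card_filter]
      _ = ∑ v ∈ C', ∑ w ∈ A, if v ∈ T w then 1 else 0 := Finset.sum_comm
      _ = ∑ v ∈ C', (A.filter (fun w => v ∈ T w)).card := by
          refine Finset.sum_congr rfl fun v _ => ?_
          rw [Finset.card_filter]
      _ ≤ ∑ v ∈ C', (m - 1) := Finset.sum_le_sum hfibre
      _ = C'.card * (m - 1) := by rw [Finset.sum_const, smul_eq_mul]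
  have hAC : A.card ≤ C'.card := Nat.le_of_mul_le_mul_right key (by omega)
  have : C'.card = C.card - 1 := Finset.card_erase_of_mem hy'C
  have hCpos : 1 ≤ C.card := Finset.card_pos.mpr ⟨y', hy'C⟩
  omega

include hconn tf hm hm2 in
lemma chainC : ∀ n : ℕ, ∀ x y : V, G.dist x y = n + 1 →
    n + 1 ≤ ((G.neighborFinset y).filter (fun w => G.dist x w = n)).card := by
  intro n
  induction n with
  | zero =>
    intro x y h
    refine le_trans ?_ (Finset.card_pos.mpr ⟨x, ?_⟩)
    · norm_num
    · simp only [Finset.mem_filter, SimpleGraph.mem_neighborFinset]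
      exact ⟨(SimpleGraph.dist_eq_one_iff_adj.mp h).symm, SimpleGraph.dist_self⟩
  | succ n ih =>
    intro x y h
    obtain ⟨y', hadj, hy'⟩ := penult hconn h
    have hstep := terwilliger_step hconn tf hm hm2 (n := n) h hadj hy'
    have hA := ih x y' hy'
    omega

include hconn tf hm hm2 in
lemma dist_le_degree {d : ℕ} (hreg : G.IsRegularOfDegree d) (u v : V) : G.dist u v ≤ d := by
  cases hn : G.dist u v with
  | zero => omega
  | succ n =>
    have h1 := chainC hconn tf hm hm2 n u v hn
    have h2 : ((G.neighborFinset v).filter (fun w => G.dist u w = n)).card ≤ d := by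
      calc ((G.neighborFinset v).filter (fun w => G.dist u w = n)).card
          ≤ (G.neighborFinset v).card := Finset.card_filter_le _ _
        _ = d := hreg v
    omega

include hconn tf hm hm2 in
lemma V_finite {d : ℕ} (hreg : G.IsRegularOfDegree d) : Finite V := by
  obtain ⟨v0⟩ := hconn.nonempty
  rw [← Set.finite_univ_iff]
  apply Set.Finite.subset (ball_finite hconn v0 d)
  intro y _
  exact dist_le_degree hconn tf hm hm2 hreg v0 y

end Terwilliger

section FintypeSection

variable [Fintype V]

lemma cost_eq_sum (G : SimpleGraph V) (π : V → V → ℝ) :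
    transportCost G π = ∑ u : V, ∑ v : V, (G.dist u v : ℝ) * π u v := by
  rw [transportCost, tsum_fintype]
  exact Fintype.sum_prod_type _

lemma plan_rows (μ₁ μ₂ : V → ℝ) (π : V → V → ℝ) (h : IsTransportPlan μ₁ μ₂ π) :
    ∀ u, ∑ v, π u v = μ₁ u := fun u => (tsum_fintype _).symm.trans (h.2.1 u)

lemma plan_cols (μ₁ μ₂ : V → ℝ) (π : V → V → ℝ) (h : IsTransportPlan μ₁ μ₂ π) :
    ∀ v, ∑ u, π u v = μ₂ v := fun v => (tsum_fintype _).symm.trans (h.2.2 v)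

lemma cost_lower (G : SimpleGraph V) (μ₁ μ₂ : V → ℝ) (f : V → ℝ)
    (hf : ∀ u v, f u - f v ≤ (G.dist u v : ℝ)) (π : V → V → ℝ)
    (hπ : IsTransportPlan μ₁ μ₂ π) :
    ∑ u, μ₁ u * f u - ∑ v, μ₂ v * f v ≤ transportCost G π := by
  rw [cost_eq_sum]
  have step1 : ∑ u, ∑ v, (f u - f v) * π u v ≤ ∑ u : V, ∑ v : V, (G.dist u v : ℝ) * π u v := by
    refine Finset.sum_le_sum fun u _ => Finset.sum_le_sum fun v _ => ?_
    exact mul_le_mul_of_nonneg_right (hf u v) (hπ.1 u v)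
  refine le_trans (le_of_eq ?_) step1
  have expand : ∀ u v : V, (f u - f v) * π u v = f u * π u v - f v * π u v := fun u v => by ring
  simp_rw [expand, Finset.sum_sub_distrib]
  congr 1
  · rw [Finset.sum_congr rfl (fun u _ => (Finset.mul_sum _ _ _).symm)]
    refine Finset.sum_congr rfl fun u _ => ?_
    rw [plan_rows μ₁ μ₂ π hπ u, mul_comm]
  · rw [Finset.sum_comm]
    refine Finset.sum_congr rfl fun v _ => ?_
    rw [← Finset.mul_sum, plan_cols μ₁ μ₂ π hπ v, mul_comm]

lemma W1_eq (G : SimpleGraph V) (μ₁ μ₂ : V → ℝ) (c₀ : ℝ) (π₀ : V → V → ℝ)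
    (hplan : IsTransportPlan μ₁ μ₂ π₀) (hcost : transportCost G π₀ = c₀)
    (f : V → ℝ) (hf : ∀ u v, f u - f v ≤ (G.dist u v : ℝ))
    (hfval : ∑ u, μ₁ u * f u - ∑ v, μ₂ v * f v = c₀) :
    W1 G μ₁ μ₂ = c₀ := by
  have hmem : c₀ ∈ {c : ℝ | ∃ π, IsTransportPlan μ₁ μ₂ π ∧ transportCost G π = c} :=
    ⟨π₀, hplan, hcost⟩
  have hlb : ∀ c ∈ {c : ℝ | ∃ π, IsTransportPlan μ₁ μ₂ π ∧ transportCost G π = c}, c₀ ≤ c := by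
    rintro c ⟨π, hπ, rfl⟩
    exact hfval ▸ cost_lower G μ₁ μ₂ f hf π hπ
  exact le_antisymm (csInf_le ⟨c₀, hlb⟩ hmem) (le_csInf ⟨c₀, hmem⟩ hlb)

omit [Fintype V] in
lemma lip01 (G : SimpleGraph V) (hconn : G.Connected) (f : V → ℝ)
    (hf : ∀ u, f u = 0 ∨ f u = 1) : ∀ u v, f u - f v ≤ (G.dist u v : ℝ) := by
  intro u v
  rcases eq_or_ne u v with rfl | hne
  · simp
  · have h1 : 1 ≤ (G.dist u v : ℝ) := by
      exact_mod_cast hconn.pos_dist_of_ne hne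
    rcases hf u with h | h <;> rcases hf v with h' | h' <;> rw [h, h'] <;> linarith

lemma sum_mu (G : SimpleGraph V) [G.LocallyFinite] (d : ℕ) (p : ℝ) (x : V) (g : V → ℝ) :
    ∑ u, muMeasure G d p x u * g u
      = p * g x + ((1 - p) / d) * ∑ z ∈ G.neighborFinset x, g z := by
  have key : ∀ u, muMeasure G d p x u * g u
      = (if u = x then p * g x else 0)
        + (if u ∈ G.neighborFinset x then ((1 - p) / d) * g u else 0) := by
    intro u
    rcases eq_or_ne u x with rfl | hne
    · simp [muMeasure]
    · simp only [muMeasure, if_neg hne, SimpleGraph.mem_neighborFinset]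
      by_cases hadj : G.Adj x u
      · simp [hadj, hne]
      · simp [hadj, hne]
  simp_rw [key]
  rw [Finset.sum_add_distrib, Finset.sum_ite_eq' Finset.univ x, Finset.sum_ite_mem,
    Finset.univ_inter, Finset.mul_sum]
  simp

variable {G : SimpleGraph V} [G.LocallyFinite]
  (tf : ∀ a b c : V, G.Adj a b → G.Adj b c → G.Adj a c → False)
  {m d : ℕ} (hm : ∀ u v : V, G.dist u v = 2 → (cn G u v).card = m) (hm2 : 2 ≤ m)
  (hreg : G.IsRegularOfDegree d)
  {x y : V} (hxy : G.Adj x y)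

lemma sum_ite_card (P : V → Prop) (c : ℝ) :
    ∑ v, (if P v then c else 0) = ((Finset.univ.filter P).card : ℝ) * c := by
  rw [← Finset.sum_filter, Finset.sum_const, nsmul_eq_mul]

include hreg hxy in
lemma cardA : (Finset.univ.filter (fun u => G.Adj x u ∧ u ≠ y)).card = d - 1 := by
  have : Finset.univ.filter (fun u => G.Adj x u ∧ u ≠ y) = (G.neighborFinset x).erase y := by
    ext u
    simp [Finset.mem_erase, SimpleGraph.mem_neighborFinset, and_comm]
  rw [this, Finset.card_erase_of_mem (by simpa using hxy), ← hreg x]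
  rfl

include tf hm hxy in
lemma K1 {z : V} (hz : G.Adj x z) (hzy : z ≠ y) :
    (Finset.univ.filter (fun v => G.Adj y v ∧ G.Adj z v ∧ v ≠ x)).card = m - 1 := by
  have hnadj : ¬ G.Adj y z := fun h => tf x y z hxy h hz
  have hdist : G.dist y z = 2 := dist_two (fun h => hzy h.symm) hnadj hxy.symm hz
  have hfilter : Finset.univ.filter (fun v => G.Adj y v ∧ G.Adj z v ∧ v ≠ x)
      = (cn G y z).erase x := by
    ext v
    simp only [Finset.mem_filter, Finset.mem_univ, true_and, Finset.mem_erase, cn,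
      SimpleGraph.mem_neighborFinset]
    tauto
  have hxmem : x ∈ cn G y z := by
    simp [cn, SimpleGraph.mem_neighborFinset, hxy.symm, hz.symm]
  rw [hfilter, Finset.card_erase_of_mem hxmem, hm y z hdist]

include tf hm hxy in
lemma K2 {w : V} (hw : G.Adj y w) (hwx : w ≠ x) :
    (Finset.univ.filter (fun u => G.Adj x u ∧ G.Adj u w ∧ u ≠ y)).card = m - 1 := by
  have hnadj : ¬ G.Adj x w := fun h => tf x y w hxy hw h
  have hdist : G.dist x w = 2 := dist_two (fun h => hwx h.symm) hnadj hxy hw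
  have hfilter : Finset.univ.filter (fun u => G.Adj x u ∧ G.Adj u w ∧ u ≠ y)
      = (cn G x w).erase y := by
    ext u
    simp only [Finset.mem_filter, Finset.mem_univ, true_and, Finset.mem_erase, cn,
      SimpleGraph.mem_neighborFinset]
    constructor
    · rintro ⟨h1, h2, h3⟩; exact ⟨h3, h1, h2.symm⟩
    · rintro ⟨h3, h1, h2⟩; exact ⟨h1, h2.symm, h3⟩
  have hymem : y ∈ cn G x w := by
    simp [cn, SimpleGraph.mem_neighborFinset, hxy, hw.symm, SimpleGraph.Adj.symm]
  rw [hfilter, Finset.card_erase_of_mem hymem, hm x w hdist]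

/-- fourth-branch condition -/
def C4 (G : SimpleGraph V) (x y u v : V) : Prop :=
  G.Adj x u ∧ G.Adj y v ∧ G.Adj u v ∧ u ≠ y ∧ v ≠ x

include tf hm hm2 hxy in
lemma row4 (c : ℝ) (u : V) :
    ∑ v, (if C4 G x y u v then c else 0)
      = if G.Adj x u ∧ u ≠ y then ((m : ℝ) - 1) * c else 0 := by
  by_cases hu : G.Adj x u ∧ u ≠ y
  · rw [if_pos hu]
    have : ∀ v, (if C4 G x y u v then c else 0)
        = (if G.Adj y v ∧ G.Adj u v ∧ v ≠ x then c else 0) := by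
      intro v
      refine if_congr ?_ rfl rfl
      unfold C4; tauto
    simp_rw [this]
    rw [← Finset.sum_filter, Finset.sum_const, nsmul_eq_mul]
    have h3 := K1 tf hm hxy hu.1 hu.2
    rw [h3, Nat.cast_sub (by omega), Nat.cast_one]
  · rw [if_neg hu]
    have : ∀ v, (if C4 G x y u v then c else 0) = 0 := by
      intro v
      rw [if_neg]
      unfold C4; tauto
    simp_rw [this]
    simp

include tf hm hm2 hxy in
lemma col4 (c : ℝ) (v : V) :
    ∑ u, (if C4 G x y u v then c else 0)
      = if G.Adj y v ∧ v ≠ x then ((m : ℝ) - 1) * c else 0 := by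
  by_cases hv : G.Adj y v ∧ v ≠ x
  · rw [if_pos hv]
    have : ∀ u, (if C4 G x y u v then c else 0)
        = (if G.Adj x u ∧ G.Adj u v ∧ u ≠ y then c else 0) := by
      intro u
      refine if_congr ?_ rfl rfl
      unfold C4; tauto
    simp_rw [this]
    rw [← Finset.sum_filter, Finset.sum_const, nsmul_eq_mul]
    have h3 := K2 tf hm hxy hv.1 hv.2
    rw [h3, Nat.cast_sub (by omega), Nat.cast_one]
  · rw [if_neg hv]
    have : ∀ u, (if C4 G x y u v then c else 0) = 0 := by
      intro u
      rw [if_neg]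
      unfold C4; tauto
    simp_rw [this]
    simp

noncomputable def plan1 (G : SimpleGraph V) (d m : ℕ) (p : ℝ) (x y : V) : V → V → ℝ :=
  fun u v =>
    (if u = x ∧ v = x then (1-p)/d else 0)
    + (if u = x ∧ v = y then p - (1-p)/d else 0)
    + (if u = y ∧ v = y then (1-p)/d else 0)
    + (if C4 G x y u v then (1-p)/(d*((m:ℝ)-1)) else 0)

include tf hm hm2 hxy in
lemma plan1_row (hd : d ≠ 0) (p : ℝ) (u : V) :
    ∑ v, plan1 G d m p x y u v = muMeasure G d p x u := by
  have hdne : (d:ℝ) ≠ 0 := Nat.cast_ne_zero.mpr hd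
  have hm1 : ((m:ℝ) - 1) ≠ 0 := by
    have : (2:ℝ) ≤ (m:ℝ) := by exact_mod_cast hm2
    linarith
  unfold plan1
  rw [Finset.sum_add_distrib, Finset.sum_add_distrib, Finset.sum_add_distrib,
    row4 tf hm hm2 hxy]
  by_cases hux : u = x
  · have h4 : ¬ (G.Adj x u ∧ u ≠ y) := fun h => G.irrefl (hux ▸ h.1)
    have h3 : ∀ v : V, (if u = y ∧ v = y then (1-p)/(d:ℝ) else 0) = 0 := by
      intro v; simp [hux, hxy.ne]
    have e1 : ∀ v : V, (if u = x ∧ v = x then (1-p)/(d:ℝ) else 0) = (if v = x then (1-p)/(d:ℝ) else 0) := by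
      intro v; simp [hux]
    have e2 : ∀ v : V, (if u = x ∧ v = y then p - (1-p)/(d:ℝ) else 0) = (if v = y then p - (1-p)/(d:ℝ) else 0) := by
      intro v; simp [hux]
    simp_rw [e1, e2, h3]
    rw [Finset.sum_ite_eq' Finset.univ x (fun _ => (1-p)/(d:ℝ)),
      Finset.sum_ite_eq' Finset.univ y (fun _ => p - (1-p)/(d:ℝ)), if_neg h4]
    simp [muMeasure, hux]
  · by_cases huy : u = y
    · have h4 : ¬ (G.Adj x u ∧ u ≠ y) := fun h => h.2 huy
      have e1 : ∀ v : V, (if u = x ∧ v = x then (1-p)/(d:ℝ) else 0) = 0 := by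
        intro v; simp [hux]
      have e2 : ∀ v : V, (if u = x ∧ v = y then p - (1-p)/(d:ℝ) else 0) = 0 := by
        intro v; simp [hux]
      have e3 : ∀ v : V, (if u = y ∧ v = y then (1-p)/(d:ℝ) else 0) = (if v = y then (1-p)/(d:ℝ) else 0) := by
        intro v; simp [huy]
      simp_rw [e1, e2, e3]
      rw [Finset.sum_ite_eq' Finset.univ y (fun _ => (1-p)/(d:ℝ)), if_neg h4]
      simp [muMeasure, huy, hux, hxy, hxy.ne']
    · have e1 : ∀ v : V, (if u = x ∧ v = x then (1-p)/(d:ℝ) else 0) = 0 := by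
        intro v; simp [hux]
      have e2 : ∀ v : V, (if u = x ∧ v = y then p - (1-p)/(d:ℝ) else 0) = 0 := by
        intro v; simp [hux]
      have e3 : ∀ v : V, (if u = y ∧ v = y then (1-p)/(d:ℝ) else 0) = 0 := by
        intro v; simp [huy]
      simp_rw [e1, e2, e3]
      simp only [Finset.sum_const_zero, zero_add, add_zero]
      by_cases hadj : G.Adj x u
      · rw [if_pos ⟨hadj, huy⟩, muMeasure, if_neg hux, if_pos hadj]
        field_simp
      · rw [if_neg (fun h : G.Adj x u ∧ u ≠ y => hadj h.1), muMeasure, if_neg hux, if_neg hadj]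

include tf hm hm2 hxy in
lemma plan1_col (hd : d ≠ 0) (p : ℝ) (v : V) :
    ∑ u, plan1 G d m p x y u v = muMeasure G d p y v := by
  have hdne : (d:ℝ) ≠ 0 := Nat.cast_ne_zero.mpr hd
  have hm1 : ((m:ℝ) - 1) ≠ 0 := by
    have : (2:ℝ) ≤ (m:ℝ) := by exact_mod_cast hm2
    linarith
  unfold plan1
  rw [Finset.sum_add_distrib, Finset.sum_add_distrib, Finset.sum_add_distrib,
    col4 tf hm hm2 hxy]
  by_cases hvx : v = x
  · have h4 : ¬ (G.Adj y v ∧ v ≠ x) := fun h => h.2 hvx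
    have e1 : ∀ u : V, (if u = x ∧ v = x then (1-p)/(d:ℝ) else 0) = (if u = x then (1-p)/(d:ℝ) else 0) := by
      intro u; simp [hvx]
    have e2 : ∀ u : V, (if u = x ∧ v = y then p - (1-p)/(d:ℝ) else 0) = 0 := by
      intro u; simp [hvx, hxy.ne]
    have e3 : ∀ u : V, (if u = y ∧ v = y then (1-p)/(d:ℝ) else 0) = 0 := by
      intro u
      have : v ≠ y := by rw [hvx]; exact hxy.ne
      simp [this]
    simp_rw [e1, e2, e3]
    rw [Finset.sum_ite_eq' Finset.univ x (fun _ => (1-p)/(d:ℝ)), if_neg h4]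
    simp [muMeasure, hvx, hxy.ne, hxy.symm]
  · by_cases hvy : v = y
    · have h4 : ¬ (G.Adj y v ∧ v ≠ x) := fun h => G.irrefl (hvy ▸ h.1)
      have e1 : ∀ u : V, (if u = x ∧ v = x then (1-p)/(d:ℝ) else 0) = 0 := by
        intro u; simp [hvx]
      have e2 : ∀ u : V, (if u = x ∧ v = y then p - (1-p)/(d:ℝ) else 0) = (if u = x then p - (1-p)/(d:ℝ) else 0) := by
        intro u; simp [hvy]
      have e3 : ∀ u : V, (if u = y ∧ v = y then (1-p)/(d:ℝ) else 0) = (if u = y then (1-p)/(d:ℝ) else 0) := by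
        intro u; simp [hvy]
      simp_rw [e1, e2, e3]
      rw [Finset.sum_ite_eq' Finset.univ x (fun _ => p - (1-p)/(d:ℝ)),
        Finset.sum_ite_eq' Finset.univ y (fun _ => (1-p)/(d:ℝ)), if_neg h4]
      simp only [Finset.sum_const_zero, Finset.mem_univ, if_pos, zero_add, add_zero]
      rw [muMeasure, if_pos hvy]
      ring
    · have e1 : ∀ u : V, (if u = x ∧ v = x then (1-p)/(d:ℝ) else 0) = 0 := by
        intro u; simp [hvx]
      have e2 : ∀ u : V, (if u = x ∧ v = y then p - (1-p)/(d:ℝ) else 0) = 0 := by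
        intro u; simp [hvy]
      have e3 : ∀ u : V, (if u = y ∧ v = y then (1-p)/(d:ℝ) else 0) = 0 := by
        intro u; simp [hvy]
      simp_rw [e1, e2, e3]
      simp only [Finset.sum_const_zero, zero_add]
      by_cases hadj : G.Adj y v
      · rw [if_pos ⟨hadj, hvx⟩, muMeasure, if_neg hvy, if_pos hadj]
        field_simp
      · rw [if_neg (fun h : G.Adj y v ∧ v ≠ x => hadj h.1), muMeasure, if_neg hvy, if_neg hadj]


include hm2 in
lemma plan1_nonneg (hd : d ≠ 0) {p : ℝ} (hp1 : 1/((d:ℝ)+1) ≤ p) (hp2 : p ≤ 1) :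
    ∀ u v, 0 ≤ plan1 G d m p x y u v := by
  intro u v
  have hdpos : (0:ℝ) < d := by
    have : 1 ≤ d := Nat.one_le_iff_ne_zero.mpr hd
    exact_mod_cast Nat.pos_of_ne_zero hd
  have hmpos : (0:ℝ) < (m:ℝ) - 1 := by
    have : (2:ℝ) ≤ (m:ℝ) := by exact_mod_cast hm2
    linarith
  have hb : 0 ≤ p - (1-p)/(d:ℝ) := by
    have h1 : 1 ≤ p * ((d:ℝ)+1) := by
      rw [div_le_iff₀ (by linarith)] at hp1
      linarith
    rw [sub_nonneg, div_le_iff₀ hdpos]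
    nlinarith
  unfold plan1
  refine add_nonneg (add_nonneg (add_nonneg ?_ ?_) ?_) ?_ <;> split <;>
    first
      | exact div_nonneg (by linarith) (by positivity)
      | exact hb
      | exact le_refl (0:ℝ)

include tf hm hm2 hreg hxy in
lemma plan1_cost (hd : d ≠ 0) (p : ℝ) :
    transportCost G (plan1 G d m p x y) = 1 - 2*(1-p)/(d:ℝ) := by
  have hdne : (d:ℝ) ≠ 0 := Nat.cast_ne_zero.mpr hd
  have hm1 : ((m:ℝ) - 1) ≠ 0 := by
    have : (2:ℝ) ≤ (m:ℝ) := by exact_mod_cast hm2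
    linarith
  rw [cost_eq_sum]
  have key : ∀ u v : V, (G.dist u v : ℝ) * plan1 G d m p x y u v
      = (if u = x ∧ v = y then p - (1-p)/(d:ℝ) else 0)
        + (if C4 G x y u v then (1-p)/((d:ℝ)*((m:ℝ)-1)) else 0) := by
    intro u v
    unfold plan1
    rw [mul_add, mul_add, mul_add]
    have t1 : (G.dist u v:ℝ) * (if u = x ∧ v = x then (1-p)/(d:ℝ) else 0) = 0 := by
      by_cases h : u = x ∧ v = x
      · rw [h.1, h.2]; simp [SimpleGraph.dist_self]
      · rw [if_neg h, mul_zero]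
    have t2 : (G.dist u v:ℝ) * (if u = x ∧ v = y then p - (1-p)/(d:ℝ) else 0)
        = (if u = x ∧ v = y then p - (1-p)/(d:ℝ) else 0) := by
      by_cases h : u = x ∧ v = y
      · rw [if_pos h, h.1, h.2, SimpleGraph.dist_eq_one_iff_adj.mpr hxy]
        norm_num
      · rw [if_neg h, mul_zero]
    have t3 : (G.dist u v:ℝ) * (if u = y ∧ v = y then (1-p)/(d:ℝ) else 0) = 0 := by
      by_cases h : u = y ∧ v = y
      · rw [h.1, h.2]; simp [SimpleGraph.dist_self]
      · rw [if_neg h, mul_zero]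
    have t4 : (G.dist u v:ℝ) * (if C4 G x y u v then (1-p)/((d:ℝ)*((m:ℝ)-1)) else 0)
        = (if C4 G x y u v then (1-p)/((d:ℝ)*((m:ℝ)-1)) else 0) := by
      by_cases h : C4 G x y u v
      · rw [if_pos h, SimpleGraph.dist_eq_one_iff_adj.mpr h.2.2.1]
        norm_num
      · rw [if_neg h, mul_zero]
    rw [t1, t2, t3, t4, zero_add, add_zero]
  simp_rw [key, Finset.sum_add_distrib]
  have S2 : ∑ u : V, ∑ v : V, (if u = x ∧ v = y then p - (1-p)/(d:ℝ) else 0)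
      = p - (1-p)/(d:ℝ) := by
    have inner : ∀ u : V, ∑ v : V, (if u = x ∧ v = y then p - (1-p)/(d:ℝ) else 0)
        = (if u = x then p - (1-p)/(d:ℝ) else 0) := by
      intro u
      by_cases hu : u = x
      · have e : ∀ v : V, (if u = x ∧ v = y then p - (1-p)/(d:ℝ) else 0)
            = (if v = y then p - (1-p)/(d:ℝ) else 0) := by
          intro v; simp [hu]
        simp_rw [e]
        rw [Finset.sum_ite_eq' Finset.univ y (fun _ => p - (1-p)/(d:ℝ))]
        simp [hu]
      · have e : ∀ v : V, (if u = x ∧ v = y then p - (1-p)/(d:ℝ) else 0) = 0 := by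
          intro v; simp [hu]
        simp_rw [e]
        simp [hu]
    simp_rw [inner]
    rw [Finset.sum_ite_eq' Finset.univ x (fun _ => p - (1-p)/(d:ℝ))]
    simp
  have S4 : ∑ u : V, ∑ v : V, (if C4 G x y u v then (1-p)/((d:ℝ)*((m:ℝ)-1)) else 0)
      = ((d:ℝ) - 1) * (((m:ℝ)-1) * ((1-p)/((d:ℝ)*((m:ℝ)-1)))) := by
    have inner : ∀ u : V, ∑ v : V, (if C4 G x y u v then (1-p)/((d:ℝ)*((m:ℝ)-1)) else 0)
        = (if G.Adj x u ∧ u ≠ y then ((m:ℝ)-1) * ((1-p)/((d:ℝ)*((m:ℝ)-1))) else 0) :=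
      row4 tf hm hm2 hxy _
    simp_rw [inner]
    rw [← Finset.sum_filter, Finset.sum_const, nsmul_eq_mul]
    have h3 := cardA hreg hxy
    rw [h3, Nat.cast_sub (Nat.one_le_iff_ne_zero.mpr hd), Nat.cast_one]
  rw [S2, S4]
  field_simp
  ring

include tf hm hm2 hxy in
lemma plan1_isplan (hd : d ≠ 0) {p : ℝ} (hp1 : 1/((d:ℝ)+1) ≤ p) (hp2 : p ≤ 1) :
    IsTransportPlan (muMeasure G d p x) (muMeasure G d p y) (plan1 G d m p x y) := by
  refine ⟨plan1_nonneg hm2 hd hp1 hp2, fun u => ?_, fun v => ?_⟩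
  · rw [tsum_fintype]; exact plan1_row tf hm hm2 hxy hd p u
  · rw [tsum_fintype]; exact plan1_col tf hm hm2 hxy hd p v


noncomputable def plan0 (G : SimpleGraph V) (d m : ℕ) (x y : V) : V → V → ℝ :=
  fun u v =>
    (if u = y ∧ v = x then 1/(d:ℝ) else 0)
    + (if C4 G x y u v then 1/((d:ℝ)*((m:ℝ)-1)) else 0)

include hm2 in
lemma plan0_nonneg : ∀ u v, 0 ≤ plan0 G d m x y u v := by
  intro u v
  have hmpos : (0:ℝ) ≤ (m:ℝ) - 1 := by
    have : (2:ℝ) ≤ (m:ℝ) := by exact_mod_cast hm2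
    linarith
  unfold plan0
  refine add_nonneg ?_ ?_ <;> split <;> positivity

include tf hm hm2 hxy in
lemma plan0_row (hd : d ≠ 0) (u : V) :
    ∑ v, plan0 G d m x y u v = muMeasure G d 0 x u := by
  have hdne : (d:ℝ) ≠ 0 := Nat.cast_ne_zero.mpr hd
  have hm1 : ((m:ℝ) - 1) ≠ 0 := by
    have : (2:ℝ) ≤ (m:ℝ) := by exact_mod_cast hm2
    linarith
  unfold plan0
  rw [Finset.sum_add_distrib, row4 tf hm hm2 hxy]
  by_cases huy : u = y
  · have h4 : ¬ (G.Adj x u ∧ u ≠ y) := fun h => h.2 huy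
    have e1 : ∀ v : V, (if u = y ∧ v = x then 1/(d:ℝ) else 0)
        = (if v = x then 1/(d:ℝ) else 0) := by
      intro v; simp [huy]
    simp_rw [e1]
    rw [Finset.sum_ite_eq' Finset.univ x (fun _ => 1/(d:ℝ)), if_neg h4]
    simp [muMeasure, huy, hxy.ne', hxy]
  · have e1 : ∀ v : V, (if u = y ∧ v = x then 1/(d:ℝ) else 0) = 0 := by
      intro v; simp [huy]
    simp_rw [e1]
    simp only [Finset.sum_const_zero, zero_add]
    by_cases hadj : G.Adj x u
    · have hux : u ≠ x := hadj.ne'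
      rw [if_pos ⟨hadj, huy⟩, muMeasure, if_neg hux, if_pos hadj]
      field_simp
      ring
    · rw [if_neg (fun h : G.Adj x u ∧ u ≠ y => hadj h.1), muMeasure]
      by_cases hux : u = x
      · simp [hux]
      · rw [if_neg hux, if_neg hadj]

include tf hm hm2 hxy in
lemma plan0_col (hd : d ≠ 0) (v : V) :
    ∑ u, plan0 G d m x y u v = muMeasure G d 0 y v := by
  have hdne : (d:ℝ) ≠ 0 := Nat.cast_ne_zero.mpr hd
  have hm1 : ((m:ℝ) - 1) ≠ 0 := by
    have : (2:ℝ) ≤ (m:ℝ) := by exact_mod_cast hm2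
    linarith
  unfold plan0
  rw [Finset.sum_add_distrib, col4 tf hm hm2 hxy]
  by_cases hvx : v = x
  · have h4 : ¬ (G.Adj y v ∧ v ≠ x) := fun h => h.2 hvx
    have e1 : ∀ u : V, (if u = y ∧ v = x then 1/(d:ℝ) else 0)
        = (if u = y then 1/(d:ℝ) else 0) := by
      intro u; simp [hvx]
    simp_rw [e1]
    rw [Finset.sum_ite_eq' Finset.univ y (fun _ => 1/(d:ℝ)), if_neg h4]
    simp [muMeasure, hvx, hxy.ne, hxy.symm]
  · have e1 : ∀ u : V, (if u = y ∧ v = x then 1/(d:ℝ) else 0) = 0 := by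
      intro u; simp [hvx]
    simp_rw [e1]
    simp only [Finset.sum_const_zero, zero_add]
    by_cases hadj : G.Adj y v
    · have hvy : v ≠ y := hadj.ne'
      rw [if_pos ⟨hadj, hvx⟩, muMeasure, if_neg hvy, if_pos hadj]
      field_simp
      ring
    · rw [if_neg (fun h : G.Adj y v ∧ v ≠ x => hadj h.1), muMeasure]
      by_cases hvy : v = y
      · simp [hvy]
      · rw [if_neg hvy, if_neg hadj]

include tf hm hm2 hreg hxy in
lemma plan0_cost (hd : d ≠ 0) : transportCost G (plan0 G d m x y) = 1 := by
  have hdne : (d:ℝ) ≠ 0 := Nat.cast_ne_zero.mpr hd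
  have hm1 : ((m:ℝ) - 1) ≠ 0 := by
    have : (2:ℝ) ≤ (m:ℝ) := by exact_mod_cast hm2
    linarith
  rw [cost_eq_sum]
  have key : ∀ u v : V, (G.dist u v : ℝ) * plan0 G d m x y u v
      = (if u = y ∧ v = x then 1/(d:ℝ) else 0)
        + (if C4 G x y u v then 1/((d:ℝ)*((m:ℝ)-1)) else 0) := by
    intro u v
    unfold plan0
    rw [mul_add]
    have t1 : (G.dist u v:ℝ) * (if u = y ∧ v = x then 1/(d:ℝ) else 0)
        = (if u = y ∧ v = x then 1/(d:ℝ) else 0) := by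
      by_cases h : u = y ∧ v = x
      · rw [if_pos h, h.1, h.2, SimpleGraph.dist_eq_one_iff_adj.mpr hxy.symm]
        norm_num
      · rw [if_neg h, mul_zero]
    have t2 : (G.dist u v:ℝ) * (if C4 G x y u v then 1/((d:ℝ)*((m:ℝ)-1)) else 0)
        = (if C4 G x y u v then 1/((d:ℝ)*((m:ℝ)-1)) else 0) := by
      by_cases h : C4 G x y u v
      · rw [if_pos h, SimpleGraph.dist_eq_one_iff_adj.mpr h.2.2.1]
        norm_num
      · rw [if_neg h, mul_zero]
    rw [t1, t2]
  simp_rw [key, Finset.sum_add_distrib]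
  have S1 : ∑ u : V, ∑ v : V, (if u = y ∧ v = x then 1/(d:ℝ) else 0) = 1/(d:ℝ) := by
    have inner : ∀ u : V, ∑ v : V, (if u = y ∧ v = x then 1/(d:ℝ) else 0)
        = (if u = y then 1/(d:ℝ) else 0) := by
      intro u
      by_cases hu : u = y
      · have e : ∀ v : V, (if u = y ∧ v = x then 1/(d:ℝ) else 0)
            = (if v = x then 1/(d:ℝ) else 0) := by
          intro v; simp [hu]
        simp_rw [e]
        rw [Finset.sum_ite_eq' Finset.univ x (fun _ => 1/(d:ℝ))]
        simp [hu]
      · have e : ∀ v : V, (if u = y ∧ v = x then 1/(d:ℝ) else 0) = 0 := by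
          intro v; simp [hu]
        simp_rw [e]
        simp [hu]
    simp_rw [inner]
    rw [Finset.sum_ite_eq' Finset.univ y (fun _ => 1/(d:ℝ))]
    simp
  have S2 : ∑ u : V, ∑ v : V, (if C4 G x y u v then 1/((d:ℝ)*((m:ℝ)-1)) else 0)
      = ((d:ℝ) - 1) * (((m:ℝ)-1) * (1/((d:ℝ)*((m:ℝ)-1)))) := by
    have inner : ∀ u : V, ∑ v : V, (if C4 G x y u v then 1/((d:ℝ)*((m:ℝ)-1)) else 0)
        = (if G.Adj x u ∧ u ≠ y then ((m:ℝ)-1) * (1/((d:ℝ)*((m:ℝ)-1))) else 0) :=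
      row4 tf hm hm2 hxy _
    simp_rw [inner]
    rw [← Finset.sum_filter, Finset.sum_const, nsmul_eq_mul]
    have h3 := cardA hreg hxy
    rw [h3, Nat.cast_sub (Nat.one_le_iff_ne_zero.mpr hd), Nat.cast_one]
  rw [S1, S2]
  field_simp
  ring

include tf hm hm2 hxy in
lemma plan0_isplan (hd : d ≠ 0) :
    IsTransportPlan (muMeasure G d 0 x) (muMeasure G d 0 y) (plan0 G d m x y) := by
  refine ⟨plan0_nonneg hm2, fun u => ?_, fun v => ?_⟩
  · rw [tsum_fintype]; exact plan0_row tf hm hm2 hxy hd u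
  · rw [tsum_fintype]; exact plan0_col tf hm hm2 hxy hd v

include tf hreg hxy in
lemma dual0 (hconn : G.Connected) (hd : d ≠ 0) :
    ∃ f : V → ℝ, (∀ u v, f u - f v ≤ (G.dist u v : ℝ)) ∧
      ∑ u, muMeasure G d 0 x u * f u - ∑ v, muMeasure G d 0 y v * f v = 1 := by
  have hdne : (d:ℝ) ≠ 0 := Nat.cast_ne_zero.mpr hd
  refine ⟨fun u => if G.Adj x u then 1 else 0, ?_, ?_⟩
  · apply lip01 G hconn
    intro u; split <;> simp
  · rw [sum_mu, sum_mu]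
    have h1 : ∑ z ∈ G.neighborFinset x, (if G.Adj x z then (1:ℝ) else 0)
        = (d:ℝ) := by
      rw [Finset.sum_congr rfl (fun z hz => if_pos (by
        rwa [SimpleGraph.mem_neighborFinset] at hz)), Finset.sum_const, nsmul_eq_mul, mul_one,
        ← hreg x]
      rfl
    have h2 : ∑ z ∈ G.neighborFinset y, (if G.Adj x z then (1:ℝ) else 0) = 0 := by
      refine Finset.sum_eq_zero fun w hw => ?_
      rw [SimpleGraph.mem_neighborFinset] at hw
      rw [if_neg]
      intro hadj
      exact tf x w y hadj hw.symm hxy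
    rw [h1, h2]
    have hfy : (if G.Adj x y then (1:ℝ) else 0) = 1 := if_pos hxy
    have hfx : (if G.Adj x x then (1:ℝ) else 0) = 0 := if_neg (G.irrefl)
    rw [hfy, hfx]
    field_simp
    ring

include tf hreg hxy in
lemma dual1 (hconn : G.Connected) (hd : d ≠ 0) (p : ℝ) :
    ∃ f : V → ℝ, (∀ u v, f u - f v ≤ (G.dist u v : ℝ)) ∧
      ∑ u, muMeasure G d p x u * f u - ∑ v, muMeasure G d p y v * f v
        = 1 - 2*(1-p)/(d:ℝ) := by
  have hdne : (d:ℝ) ≠ 0 := Nat.cast_ne_zero.mpr hd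
  refine ⟨fun u => if u = x ∨ (G.Adj x u ∧ u ≠ y) then 1 else 0, ?_, ?_⟩
  · apply lip01 G hconn
    intro u
    split <;> simp
  · rw [sum_mu, sum_mu]
    have hfx : (if x = x ∨ (G.Adj x x ∧ x ≠ y) then (1:ℝ) else 0) = 1 := by simp
    have hfy : (if y = x ∨ (G.Adj x y ∧ y ≠ y) then (1:ℝ) else 0) = 0 := by
      rw [if_neg]
      rintro (h | h)
      · exact hxy.ne' h
      · exact h.2 rfl
    have h1 : ∑ z ∈ G.neighborFinset x, (if z = x ∨ (G.Adj x z ∧ z ≠ y) then (1:ℝ) else 0)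
        = (d:ℝ) - 1 := by
      have e : ∀ z ∈ G.neighborFinset x,
          (if z = x ∨ (G.Adj x z ∧ z ≠ y) then (1:ℝ) else 0)
            = 1 - (if z = y then (1:ℝ) else 0) := by
        intro z hz
        rw [SimpleGraph.mem_neighborFinset] at hz
        by_cases hzy : z = y
        · rw [if_pos hzy, if_neg]
          · norm_num
          · rintro (h | h)
            · exact hxy.ne' (hzy ▸ h)
            · exact h.2 hzy
        · rw [if_pos (Or.inr ⟨hz, hzy⟩), if_neg hzy]
          norm_num
      rw [Finset.sum_congr rfl e, Finset.sum_sub_distrib, Finset.sum_const, nsmul_eq_mul,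
        mul_one, Finset.sum_ite_eq' (G.neighborFinset x) y (fun _ => (1:ℝ)),
        if_pos (by rwa [SimpleGraph.mem_neighborFinset])]
      rw [show (G.neighborFinset x).card = d from hreg x]
    have h2 : ∑ z ∈ G.neighborFinset y, (if z = x ∨ (G.Adj x z ∧ z ≠ y) then (1:ℝ) else 0)
        = 1 := by
      have e : ∀ z ∈ G.neighborFinset y,
          (if z = x ∨ (G.Adj x z ∧ z ≠ y) then (1:ℝ) else 0)
            = (if z = x then (1:ℝ) else 0) := by
        intro z hz
        rw [SimpleGraph.mem_neighborFinset] at hz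
        by_cases hzx : z = x
        · rw [if_pos (Or.inl hzx), if_pos hzx]
        · rw [if_neg, if_neg hzx]
          rintro (h | h)
          · exact hzx h
          · exact tf x z y h.1 hz.symm hxy
      rw [Finset.sum_congr rfl e,
        Finset.sum_ite_eq' (G.neighborFinset y) x (fun _ => (1:ℝ)),
        if_pos (by rw [SimpleGraph.mem_neighborFinset]; exact hxy.symm)]
    rw [h1, h2, hfx, hfy]
    field_simp
    ring

include tf hm hm2 hreg hxy in
lemma W1_zero_lemma (hconn : G.Connected) (hd : d ≠ 0) :
    W1 G (muMeasure G d 0 x) (muMeasure G d 0 y) = 1 := by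
  obtain ⟨f, hf, hval⟩ := dual0 tf hreg hxy hconn hd
  exact W1_eq G _ _ 1 (plan0 G d m x y) (plan0_isplan tf hm hm2 hxy hd)
    (plan0_cost tf hm hm2 hreg hxy hd) f hf hval

include tf hm hm2 hreg hxy in
lemma W1_gen_lemma (hconn : G.Connected) (hd : d ≠ 0) {p : ℝ}
    (hp1 : 1/((d:ℝ)+1) ≤ p) (hp2 : p ≤ 1) :
    W1 G (muMeasure G d p x) (muMeasure G d p y) = 1 - 2*(1-p)/(d:ℝ) := by
  obtain ⟨f, hf, hval⟩ := dual1 tf hreg hxy hconn hd p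
  exact W1_eq G _ _ _ (plan1 G d m p x y) (plan1_isplan tf hm hm2 hxy hd hp1 hp2)
    (plan1_cost tf hm hm2 hreg hxy hd p) f hf hval

end FintypeSection



end Stmt17Aux

/-- For a distance-regular graph of vertex degree `d` and girth `4`,
every edge satisfies `κ₀(x,y) = 0` and `κ_LLY(x,y) = 2/d`. -/
theorem stmt_17 (G : SimpleGraph V) [G.LocallyFinite] (hconn : G.Connected)
    (d : ℕ) (hreg : G.IsRegularOfDegree d) (hdr : IsDistanceRegular G)
    (hgirth : G.girth = 4) :
    ∀ x y : V, G.Adj x y → kappa G d 0 x y = 0 ∧ kappaLLY G d x y = 2 / (d : ℝ) := by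
  intro x y hxy
  classical
  have tf := Stmt17Aux.triangle_free hgirth
  obtain ⟨a, b, c, e, hab, hbc, hce, hea, hab', hac', hae', hbc', hbe', hce'⟩ :=
    Stmt17Aux.quadrangle hgirth
  have hdac : G.dist a c = 2 := Stmt17Aux.dist_two hac' (fun h => tf a b c hab hbc h) hab hbc
  set m := (Stmt17Aux.cn G a c).card with hmdef
  have coegen : ∀ u v : V, {z | G.dist u z = 1 ∧ G.dist v z = 1} = ↑(Stmt17Aux.cn G u v) := by
    intro u v
    ext z
    simp [Stmt17Aux.cn, SimpleGraph.dist_eq_one_iff_adj, SimpleGraph.mem_neighborFinset]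
  have hm : ∀ u v : V, G.dist u v = 2 → (Stmt17Aux.cn G u v).card = m := by
    intro u v huv
    have h := hdr a c u v (by rw [hdac, huv]) 1 1
    rw [coegen a c, coegen u v, Set.ncard_coe_finset, Set.ncard_coe_finset] at h
    rw [hmdef, h]
  have hm2 : 2 ≤ m := by
    have hbmem : b ∈ Stmt17Aux.cn G a c := by
      simp [Stmt17Aux.cn, SimpleGraph.mem_neighborFinset, hab, hbc, hbc.symm]
    have hemem : e ∈ Stmt17Aux.cn G a c := by
      simp [Stmt17Aux.cn, SimpleGraph.mem_neighborFinset, hea.symm, hce, hce.symm]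
    exact Finset.one_lt_card.mpr ⟨b, hbmem, e, hemem, hbe'⟩
  have hfin : Finite V := Stmt17Aux.V_finite hconn tf hm hm2 hreg
  obtain ⟨fint⟩ := nonempty_fintype V
  have hd : d ≠ 0 := by
    have hcard := hreg x
    have hy : y ∈ G.neighborFinset x := by simpa using hxy
    have hpos := Finset.card_pos.mpr ⟨y, hy⟩
    rw [show (G.neighborFinset x).card = G.degree x from rfl, hcard] at hpos
    omega
  have hdne : (d:ℝ) ≠ 0 := Nat.cast_ne_zero.mpr hd
  have hd1 : (1:ℝ) ≤ (d:ℝ) := by exact_mod_cast Nat.one_le_iff_ne_zero.mpr hd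
  constructor
  · rw [kappa, Stmt17Aux.W1_zero_lemma tf hm hm2 hreg hxy hconn hd]
    ring
  · rw [kappaLLY]
    have hlt : 1/((d:ℝ)+1) < 1 := by
      rw [div_lt_one (by linarith)]
      linarith
    have hmem : Set.Ioo (1/((d:ℝ)+1)) 1 ∈ nhdsWithin 1 (Set.Iio (1:ℝ)) :=
      Ioo_mem_nhdsLT_of_mem ⟨hlt, le_refl 1⟩
    have hev : (fun p => kappa G d p x y / (1-p))
        =ᶠ[nhdsWithin 1 (Set.Iio (1:ℝ))] (fun _ => 2/(d:ℝ)) := by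
      refine Filter.eventuallyEq_of_mem hmem fun p hp => ?_
      obtain ⟨hp1, hp2⟩ := hp
      have h1p : 1 - p ≠ 0 := by
        intro h
        have : p = 1 := by linarith
        exact absurd (this ▸ hp2) (lt_irrefl 1)
      have hW := Stmt17Aux.W1_gen_lemma tf hm hm2 hreg hxy hconn hd hp1.le hp2.le
      rw [kappa, hW]
      field_simp
      ring
    haveI : (nhdsWithin (1:ℝ) (Set.Iio (1:ℝ))).NeBot := nhdsLT_neBot 1
    exact Filter.Tendsto.limUnder_eq (Filter.Tendsto.congr' hev.symm tendsto_const_nhds)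
end

section
/- Let G=(V,E) be a distance-regular graph of vertex degree d and girth 4. Then the Bakry–Émery curvature satisfies K_∞(x) = 2 for every vertex x∈V. -/
open Filter
open scoped Classical

variable {V : Type*}

/-- The (non-normalized) graph Laplacian `Δf(x) = ∑_{y ∼ x} (f(y) - f(x))`. -/
noncomputable def graphLap (G : SimpleGraph V) [G.LocallyFinite] (f : V → ℝ) (x : V) : ℝ :=
  ∑ y ∈ G.neighborFinset x, (f y - f x)

/-- The operator `Γ`: `2Γ(f,g) = Δ(fg) - fΔg - gΔf`. -/
noncomputable def gammaOp (G : SimpleGraph V) [G.LocallyFinite] (f g : V → ℝ) (x : V) : ℝ :=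
  (graphLap G (fun z => f z * g z) x - f x * graphLap G g x - g x * graphLap G f x) / 2

/-- The operator `Γ₂`: `2Γ₂(f) = ΔΓ(f) - 2Γ(f, Δf)`, where `Γ(f) = Γ(f,f)`. -/
noncomputable def gamma2Op (G : SimpleGraph V) [G.LocallyFinite] (f : V → ℝ) (x : V) : ℝ :=
  (graphLap G (fun z => gammaOp G f f z) x - 2 * gammaOp G f (graphLap G f) x) / 2

/-- The set of lower Bakry–Émery curvature bounds at `x`: all `K` such that
`Γ₂(f)(x) ≥ K·Γ(f)(x)` for every `f : V → ℝ`.  The Bakry–Émery curvature `K_∞(x)` is the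
largest element of this set. -/
def curvBounds (G : SimpleGraph V) [G.LocallyFinite] (x : V) : Set ℝ :=
  {K : ℝ | ∀ f : V → ℝ, K * gammaOp G f f x ≤ gamma2Op G f x}

namespace Stmt18

variable (G : SimpleGraph V)

lemma gammaOp_eq [G.LocallyFinite] (f g : V → ℝ) (x : V) :
    gammaOp G f g x = (∑ y ∈ G.neighborFinset x, (f y - f x) * (g y - g x)) / 2 := by
  unfold gammaOp graphLap
  congr 1
  rw [Finset.mul_sum, Finset.mul_sum, ← Finset.sum_sub_distrib, ← Finset.sum_sub_distrib]
  exact Finset.sum_congr rfl fun y _ => by ring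

lemma gammaOp_self [G.LocallyFinite] (f : V → ℝ) (x : V) :
    gammaOp G f f x = (∑ y ∈ G.neighborFinset x, (f y - f x) ^ 2) / 2 := by
  rw [gammaOp_eq]
  congr 1
  exact Finset.sum_congr rfl fun y _ => (sq _).symm

lemma master [G.LocallyFinite] {d : ℕ} (hreg : G.IsRegularOfDegree d) (f : V → ℝ) (x : V) :
    4 * gamma2Op G f x
      = (4 - 2 * (d : ℝ)) * (∑ y ∈ G.neighborFinset x, (f y - f x) ^ 2)
        + 2 * (∑ y ∈ G.neighborFinset x, (f y - f x)) ^ 2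
        + ∑ y ∈ G.neighborFinset x, ∑ w ∈ (G.neighborFinset y).erase x,
            (f w - f x - 2 * (f y - f x)) ^ 2 := by
  classical
  have hcardS1 : (G.neighborFinset x).card = d := hreg x
  have hterm : ∀ y ∈ G.neighborFinset x,
      2 * gammaOp G f f y - 2 * ((f y - f x) * graphLap G f y)
        = (4 - (d : ℝ)) * (f y - f x) ^ 2
          + ∑ w ∈ (G.neighborFinset y).erase x, (f w - f x - 2 * (f y - f x)) ^ 2 := by
    intro y hy
    have hxy : x ∈ G.neighborFinset y := by
      rw [SimpleGraph.mem_neighborFinset] at hy ⊢; exact hy.symm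
    have hcard : (G.neighborFinset y).card = d := hreg y
    have hd1 : 1 ≤ d := by rw [← hcard]; exact Finset.card_pos.mpr ⟨x, hxy⟩
    have hcardT : (((G.neighborFinset y).erase x).card : ℝ) = (d : ℝ) - 1 := by
      rw [Finset.card_erase_of_mem hxy, hcard]
      push_cast [hd1]
      ring
    rw [gammaOp_self]
    unfold graphLap
    rw [← Finset.add_sum_erase _ (fun w => (f w - f y) ^ 2) hxy,
        ← Finset.add_sum_erase _ (fun w => f w - f y) hxy]
    have expand : ∑ w ∈ (G.neighborFinset y).erase x, (f w - f x - 2 * (f y - f x)) ^ 2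
        = (∑ w ∈ (G.neighborFinset y).erase x, (f w - f y) ^ 2)
          - 2 * (f y - f x) * (∑ w ∈ (G.neighborFinset y).erase x, (f w - f y))
          + ((d : ℝ) - 1) * (f y - f x) ^ 2 := by
      have h1 : ∀ w ∈ (G.neighborFinset y).erase x,
          (f w - f x - 2 * (f y - f x)) ^ 2
            = (f w - f y) ^ 2 - 2 * (f y - f x) * (f w - f y) + (f y - f x) ^ 2 := by
        intro w _; ring
      rw [Finset.sum_congr rfl h1, Finset.sum_add_distrib, Finset.sum_sub_distrib,
        ← Finset.mul_sum, Finset.sum_const, nsmul_eq_mul, hcardT]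
    rw [expand]
    ring
  have hsum := Finset.sum_congr rfl hterm
  rw [Finset.sum_sub_distrib, Finset.sum_add_distrib, ← Finset.mul_sum, ← Finset.mul_sum,
    ← Finset.mul_sum] at hsum
  have h2 : gamma2Op G f x
      = ((∑ y ∈ G.neighborFinset x, gammaOp G f f y)
          - (d : ℝ) * gammaOp G f f x
          - ∑ y ∈ G.neighborFinset x, (f y - f x) * (graphLap G f y - graphLap G f x)) / 2 := by
    unfold gamma2Op
    rw [gammaOp_eq]
    show (graphLap G (fun z => gammaOp G f f z) x - 2 * _) / 2 = _
    unfold graphLap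
    rw [Finset.sum_sub_distrib, Finset.sum_const, hcardS1, nsmul_eq_mul]
    ring
  have h4 : ∑ y ∈ G.neighborFinset x, (f y - f x) * (graphLap G f y - graphLap G f x)
      = (∑ y ∈ G.neighborFinset x, (f y - f x) * graphLap G f y)
        - (∑ y ∈ G.neighborFinset x, (f y - f x)) * graphLap G f x := by
    rw [Finset.sum_mul, ← Finset.sum_sub_distrib]
    exact Finset.sum_congr rfl fun y _ => by ring
  have h5 : graphLap G f x = ∑ y ∈ G.neighborFinset x, (f y - f x) := rfl
  have h3 : gammaOp G f f x = (∑ y ∈ G.neighborFinset x, (f y - f x) ^ 2) / 2 :=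
    gammaOp_self G f x
  rw [h2, h4, h3, h5]
  linear_combination hsum

lemma triangle_free (hgirth : G.girth = 4) :
    ∀ u v w : V, G.Adj u v → G.Adj v w → G.Adj u w → False := by
  intro u v w huv hvw huw
  have huvne : u ≠ v := huv.ne
  have hvwne : v ≠ w := hvw.ne
  have huwne : u ≠ w := huw.ne
  set cyc : G.Walk u u := .cons huv (.cons hvw (.cons huw.symm .nil)) with hcycdef
  have hcyc : cyc.IsCycle := by
    constructor
    · constructor
      · rw [SimpleGraph.Walk.isTrail_def]
        simp [hcycdef, Sym2.eq, Sym2.rel_iff', huvne, hvwne, huwne, huvne.symm, hvwne.symm,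
          huwne.symm]
      · simp [hcycdef]
    · simp [hcycdef, huvne, hvwne, huwne, huvne.symm, hvwne.symm, huwne.symm]
  have hle : G.egirth ≤ 3 := by
    have := SimpleGraph.le_egirth.mp (le_refl G.egirth) u cyc hcyc
    simpa [hcycdef] using this
  have : G.girth ≤ 3 := by
    have h3 : ((3 : ℕ) : ℕ∞) ≠ ⊤ := by simp
    have := ENat.toNat_le_toNat hle h3
    simpa [SimpleGraph.girth] using this
  omega

lemma four_cycle (hgirth : G.girth = 4) :
    ∃ a b c e : V, G.Adj a b ∧ G.Adj b c ∧ G.Adj c e ∧ G.Adj e a ∧ a ≠ c ∧ b ≠ e := by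
  have hnac : ¬ G.IsAcyclic := by
    intro h
    rw [← SimpleGraph.girth_eq_zero] at h
    omega
  obtain ⟨a, w, hwc, hwl⟩ := SimpleGraph.exists_girth_eq_length.mpr hnac
  rw [hgirth] at hwl
  cases w with
  | nil => simp at hwl
  | cons h1 p =>
    cases p with
    | nil => simp at hwl
    | cons h2 q =>
      cases q with
      | nil => simp at hwl
      | cons h3 r =>
        cases r with
        | nil => simp at hwl
        | cons h4 s =>
          cases s with
          | cons h5 t => simp at hwl
          | nil =>
            rename_i b c e
            have hnodup := hwc.2
            simp [SimpleGraph.Walk.support_cons] at hnodup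
            exact ⟨a, b, c, e, h1, h2, h3, h4, by tauto, by tauto⟩

lemma dist_two (hconn : G.Connected)
    (htf : ∀ u v w : V, G.Adj u v → G.Adj v w → G.Adj u w → False)
    {u v w : V} (huv : G.Adj u v) (hvw : G.Adj v w) (huw : u ≠ w) : G.dist u w = 2 := by
  have hle : G.dist u w ≤ 2 := by
    have := SimpleGraph.dist_le (SimpleGraph.Walk.cons huv (SimpleGraph.Walk.cons hvw .nil))
    simpa using this
  have h0 : G.dist u w ≠ 0 := by
    intro h; exact huw (hconn.dist_eq_zero_iff.mp h)
  have h1 : G.dist u w ≠ 1 := by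
    intro h; exact htf u v w huv hvw (SimpleGraph.dist_eq_one_iff_adj.mp h)
  omega

lemma common_finset [G.LocallyFinite] (u v : V) :
    {z | G.dist u z = 1 ∧ G.dist v z = 1}
      = ↑((G.neighborFinset u).filter (fun z => G.Adj v z)) := by
  ext z
  simp [SimpleGraph.dist_eq_one_iff_adj, SimpleGraph.mem_neighborFinset]

lemma counting [G.LocallyFinite] (hconn : G.Connected) (hdr : IsDistanceRegular G)
    (hgirth : G.girth = 4)
    (htf : ∀ u v w : V, G.Adj u v → G.Adj v w → G.Adj u w → False) :
    ∃ c : ℕ, 2 ≤ c ∧ ∀ u v : V, G.dist u v = 2 →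
      ((G.neighborFinset u).filter (fun z => G.Adj v z)).card = c := by
  obtain ⟨a, b, c, e, hab, hbc, hce, hea, hac, hbe⟩ := four_cycle G hgirth
  have hdac : G.dist a c = 2 := dist_two G hconn htf hab hbc hac
  refine ⟨((G.neighborFinset a).filter (fun z => G.Adj c z)).card, ?_, ?_⟩
  · rw [Nat.succ_le_iff, Finset.one_lt_card]
    refine ⟨b, ?_, e, ?_, hbe⟩ <;>
      simp [SimpleGraph.mem_neighborFinset, hab, hbc.symm, hea.symm, hce]
  · intro u v huv
    have := hdr a c u v (by rw [hdac, huv]) 1 1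
    rw [common_finset, common_finset, Set.ncard_coe_finset, Set.ncard_coe_finset] at this
    omega

end Stmt18

/-- For a distance-regular graph of vertex degree `d` and girth `4`,
the Bakry–Émery curvature satisfies `K_∞(x) = 2` at every vertex `x`, i.e. `2` is the
largest lower curvature bound at `x`. -/
theorem stmt_18 (G : SimpleGraph V) [G.LocallyFinite] (hconn : G.Connected)
    (d : ℕ) (hreg : G.IsRegularOfDegree d) (hdr : IsDistanceRegular G)
    (hgirth : G.girth = 4) :
    ∀ x : V, IsGreatest (curvBounds G x) 2 := by
  classical
  intro x
  have htf := Stmt18.triangle_free G hgirth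
  obtain ⟨c, hc2, hcount⟩ := Stmt18.counting G hconn hdr hgirth htf
  obtain ⟨a0, b0, c0, e0, hab0, h4c⟩ := Stmt18.four_cycle G hgirth
  have hd1 : 1 ≤ d := by
    rw [← hreg a0]
    exact Finset.card_pos.mpr ⟨b0, by rw [SimpleGraph.mem_neighborFinset]; exact hab0⟩
  set S1 := G.neighborFinset x with hS1def
  have hcardS1 : S1.card = d := hreg x
  have hadjxy : ∀ y ∈ S1, G.Adj x y := fun y hy => by
    rw [hS1def, SimpleGraph.mem_neighborFinset] at hy; exact hy
  have hxmem : ∀ y ∈ S1, x ∈ G.neighborFinset y := by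
    intro y hy; rw [SimpleGraph.mem_neighborFinset]; exact (hadjxy y hy).symm
  have hcardT : ∀ y ∈ S1, (((G.neighborFinset y).erase x).card : ℝ) = (d : ℝ) - 1 := by
    intro y hy
    have hcy : (G.neighborFinset y).card = d := hreg y
    rw [Finset.card_erase_of_mem (hxmem y hy), hcy]
    push_cast [hd1]
    ring
  set W := S1.biUnion (fun y => (G.neighborFinset y).erase x) with hWdef
  have hTW : ∀ y ∈ S1, (G.neighborFinset y).erase x = W.filter (fun w => G.Adj y w) := by
    intro y hy; ext w
    simp only [hWdef, Finset.mem_filter, Finset.mem_biUnion, Finset.mem_erase,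
      SimpleGraph.mem_neighborFinset]
    constructor
    · rintro ⟨hne, hadj⟩; exact ⟨⟨y, hy, hne, hadj⟩, hadj⟩
    · rintro ⟨⟨y', hy', hne, hadj'⟩, hadj⟩; exact ⟨hne, hadj⟩
  have hdistW : ∀ w ∈ W, G.dist x w = 2 := by
    intro w hw; rw [hWdef, Finset.mem_biUnion] at hw
    obtain ⟨y, hy, hw⟩ := hw
    rw [Finset.mem_erase, SimpleGraph.mem_neighborFinset] at hw
    exact Stmt18.dist_two G hconn htf (hadjxy y hy) hw.2 (fun h => hw.1 h.symm)
  have hMcard : ∀ w ∈ W, ((S1.filter (fun y => G.Adj y w)).card : ℝ) = (c : ℝ) := by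
    intro w hw
    have h1 := hcount x w (hdistW w hw)
    have h2 : S1.filter (fun y => G.Adj y w)
        = (G.neighborFinset x).filter (fun z => G.Adj w z) := by
      rw [hS1def]; apply Finset.filter_congr; intro z _; simp [SimpleGraph.adj_comm]
    rw [h2, h1]
  have hdisty : ∀ y ∈ S1, ∀ y' ∈ S1, y ≠ y' → G.dist y y' = 2 := by
    intro y hy y' hy' hne
    exact Stmt18.dist_two G hconn htf (hadjxy y hy).symm (hadjxy y' hy') hne
  have hKval : ∀ y ∈ S1, ∀ y' ∈ S1,
      ((W.filter (fun w => G.Adj y w ∧ G.Adj y' w)).card : ℝ)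
        = if y = y' then (d : ℝ) - 1 else (c : ℝ) - 1 := by
    intro y hy y' hy'
    by_cases h : y = y'
    · subst h; rw [if_pos rfl]
      have heq : W.filter (fun w => G.Adj y w ∧ G.Adj y w) = W.filter (fun w => G.Adj y w) := by
        apply Finset.filter_congr; intro w _; simp
      rw [heq, ← hTW y hy]
      exact hcardT y hy
    · rw [if_neg h]
      have heq : W.filter (fun w => G.Adj y w ∧ G.Adj y' w)
          = ((G.neighborFinset y).filter (fun z => G.Adj y' z)).erase x := by
        ext w
        simp only [Finset.mem_filter, Finset.mem_erase, SimpleGraph.mem_neighborFinset, hWdef,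
          Finset.mem_biUnion]
        constructor
        · rintro ⟨⟨y'', hy'', hne, hadj''⟩, h1, h2⟩
          exact ⟨hne, h1, h2⟩
        · rintro ⟨hne, h1, h2⟩
          exact ⟨⟨y, hy, hne, h1⟩, h1, h2⟩
      have hxin : x ∈ (G.neighborFinset y).filter (fun z => G.Adj y' z) := by
        rw [Finset.mem_filter, SimpleGraph.mem_neighborFinset]
        exact ⟨(hadjxy y hy).symm, (hadjxy y' hy').symm⟩
      rw [heq, Finset.card_erase_of_mem hxin, hcount y y' (hdisty y hy y' hy' h)]
      have hc1 : 1 ≤ c := by omega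
      push_cast [hc1]
      ring
  have hswap : ∀ F : V → V → ℝ,
      ∑ y ∈ S1, ∑ w ∈ (G.neighborFinset y).erase x, F y w
        = ∑ w ∈ W, ∑ y ∈ S1.filter (fun y => G.Adj y w), F y w := by
    intro F
    calc ∑ y ∈ S1, ∑ w ∈ (G.neighborFinset y).erase x, F y w
        = ∑ y ∈ S1, ∑ w ∈ W.filter (fun w => G.Adj y w), F y w :=
          Finset.sum_congr rfl (fun y hy => by rw [hTW y hy])
      _ = ∑ y ∈ S1, ∑ w ∈ W, if G.Adj y w then F y w else 0 :=
          Finset.sum_congr rfl (fun y _ => Finset.sum_filter _ _)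
      _ = ∑ w ∈ W, ∑ y ∈ S1, if G.Adj y w then F y w else 0 := Finset.sum_comm
      _ = ∑ w ∈ W, ∑ y ∈ S1.filter (fun y => G.Adj y w), F y w :=
          Finset.sum_congr rfl (fun w _ => (Finset.sum_filter _ _).symm)
  constructor
  · intro f
    have hm := Stmt18.master G hreg f x
    rw [← hS1def] at hm
    have hga := Stmt18.gammaOp_self G f x
    rw [← hS1def] at hga
    have hi : ∑ w ∈ W, ∑ y ∈ S1.filter (fun y => G.Adj y w), (f y - f x) ^ 2
        = ((d : ℝ) - 1) * ∑ y ∈ S1, (f y - f x) ^ 2 := by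
      rw [← hswap (fun y w => (f y - f x) ^ 2)]
      have h1 : ∀ y ∈ S1, ∑ _w ∈ (G.neighborFinset y).erase x, (f y - f x) ^ 2
          = ((d : ℝ) - 1) * (f y - f x) ^ 2 := by
        intro y hy
        rw [Finset.sum_const, nsmul_eq_mul, hcardT y hy]
      rw [Finset.sum_congr rfl h1, ← Finset.mul_sum]
    have hii : ∑ w ∈ W, (∑ y ∈ S1.filter (fun y => G.Adj y w), (f y - f x)) ^ 2
        = ((c : ℝ) - 1) * (∑ y ∈ S1, (f y - f x)) ^ 2
          + ((d : ℝ) - (c : ℝ)) * ∑ y ∈ S1, (f y - f x) ^ 2 := by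
      have step1 : ∀ w ∈ W, (∑ y ∈ S1.filter (fun y => G.Adj y w), (f y - f x)) ^ 2
          = ∑ y ∈ S1, ∑ y' ∈ S1,
              ((if G.Adj y w then f y - f x else 0)
                * (if G.Adj y' w then f y' - f x else 0)) := by
        intro w _
        rw [Finset.sum_filter, sq, Finset.sum_mul_sum]
      rw [Finset.sum_congr rfl step1, Finset.sum_comm]
      have step2 : ∀ y ∈ S1, ∑ w ∈ W, ∑ y' ∈ S1,
          ((if G.Adj y w then f y - f x else 0) * (if G.Adj y' w then f y' - f x else 0))
          = ∑ y' ∈ S1, ((f y - f x) * (f y' - f x)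
              * (if y = y' then (d : ℝ) - 1 else (c : ℝ) - 1)) := by
        intro y hy
        rw [Finset.sum_comm]
        apply Finset.sum_congr rfl
        intro y' hy'
        have h3 : ∀ w ∈ W,
            (if G.Adj y w then f y - f x else 0) * (if G.Adj y' w then f y' - f x else 0)
            = if (G.Adj y w ∧ G.Adj y' w) then (f y - f x) * (f y' - f x) else 0 := by
          intro w _
          by_cases h1 : G.Adj y w <;> by_cases h2 : G.Adj y' w <;> simp [h1, h2]
        rw [Finset.sum_congr rfl h3, ← Finset.sum_filter, Finset.sum_const, nsmul_eq_mul,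
          hKval y hy y' hy']
        ring
      rw [Finset.sum_congr rfl step2]
      have step3 : ∀ y ∈ S1, ∑ y' ∈ S1, ((f y - f x) * (f y' - f x)
            * (if y = y' then (d : ℝ) - 1 else (c : ℝ) - 1))
          = ((c : ℝ) - 1) * ((f y - f x) * ∑ y' ∈ S1, (f y' - f x))
            + ((d : ℝ) - (c : ℝ)) * (f y - f x) ^ 2 := by
        intro y hy
        have h4 : ∀ y' ∈ S1, (f y - f x) * (f y' - f x)
              * (if y = y' then (d : ℝ) - 1 else (c : ℝ) - 1)
            = ((c : ℝ) - 1) * ((f y - f x) * (f y' - f x))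
              + (if y = y' then ((d : ℝ) - (c : ℝ)) * (f y - f x) ^ 2 else 0) := by
          intro y' _
          split_ifs with h
          · subst h; ring
          · ring
        rw [Finset.sum_congr rfl h4, Finset.sum_add_distrib, ← Finset.mul_sum, ← Finset.mul_sum,
          Finset.sum_ite_eq S1 y (fun _ => ((d : ℝ) - (c : ℝ)) * (f y - f x) ^ 2), if_pos hy]
      rw [Finset.sum_congr rfl step3, Finset.sum_add_distrib, ← Finset.mul_sum, ← Finset.mul_sum,
        ← Finset.sum_mul]
      ring
    have hDswap : ∑ y ∈ S1, ∑ w ∈ (G.neighborFinset y).erase x,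
          (f w - f x - 2 * (f y - f x)) ^ 2
        = ∑ w ∈ W, ∑ y ∈ S1.filter (fun y => G.Adj y w), (f w - f x - 2 * (f y - f x)) ^ 2 :=
      hswap (fun y w => (f w - f x - 2 * (f y - f x)) ^ 2)
    have hperw : ∀ w ∈ W,
        4 * ((c : ℝ) * (∑ y ∈ S1.filter (fun y => G.Adj y w), (f y - f x) ^ 2)
            - (∑ y ∈ S1.filter (fun y => G.Adj y w), (f y - f x)) ^ 2)
          ≤ (c : ℝ) * ∑ y ∈ S1.filter (fun y => G.Adj y w), (f w - f x - 2 * (f y - f x)) ^ 2 := by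
      intro w hw
      have hcm := hMcard w hw
      have expand : ∑ y ∈ S1.filter (fun y => G.Adj y w), (f w - f x - 2 * (f y - f x)) ^ 2
          = (c : ℝ) * (f w - f x) ^ 2
            - 4 * (f w - f x) * (∑ y ∈ S1.filter (fun y => G.Adj y w), (f y - f x))
            + 4 * ∑ y ∈ S1.filter (fun y => G.Adj y w), (f y - f x) ^ 2 := by
        have h5 : ∀ y ∈ S1.filter (fun y => G.Adj y w), (f w - f x - 2 * (f y - f x)) ^ 2
            = (f w - f x) ^ 2 - 4 * (f w - f x) * (f y - f x) + 4 * (f y - f x) ^ 2 :=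
          fun y _ => by ring
        rw [Finset.sum_congr rfl h5, Finset.sum_add_distrib, Finset.sum_sub_distrib,
          Finset.sum_const, nsmul_eq_mul, hcm, ← Finset.mul_sum, ← Finset.mul_sum]
      rw [expand]
      nlinarith [sq_nonneg ((c : ℝ) * (f w - f x)
        - 2 * ∑ y ∈ S1.filter (fun y => G.Adj y w), (f y - f x))]
    have hsum2 := Finset.sum_le_sum hperw
    have e1 : ∑ w ∈ W, (4 * ((c : ℝ) * (∑ y ∈ S1.filter (fun y => G.Adj y w), (f y - f x) ^ 2)
            - (∑ y ∈ S1.filter (fun y => G.Adj y w), (f y - f x)) ^ 2))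
        = 4 * ((c : ℝ) * (((d : ℝ) - 1) * ∑ y ∈ S1, (f y - f x) ^ 2)
            - (((c : ℝ) - 1) * (∑ y ∈ S1, (f y - f x)) ^ 2
              + ((d : ℝ) - (c : ℝ)) * ∑ y ∈ S1, (f y - f x) ^ 2)) := by
      rw [← Finset.mul_sum, Finset.sum_sub_distrib, ← Finset.mul_sum, hi, hii]
    have e2 : ∑ w ∈ W, ((c : ℝ)
          * ∑ y ∈ S1.filter (fun y => G.Adj y w), (f w - f x - 2 * (f y - f x)) ^ 2)
        = (c : ℝ) * ∑ w ∈ W, ∑ y ∈ S1.filter (fun y => G.Adj y w),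
            (f w - f x - 2 * (f y - f x)) ^ 2 :=
      (Finset.mul_sum _ _ _).symm
    rw [e1, e2] at hsum2
    have hCS : (∑ y ∈ S1, (f y - f x)) ^ 2 ≤ (d : ℝ) * ∑ y ∈ S1, (f y - f x) ^ 2 := by
      have h6 := sq_sum_le_card_mul_sum_sq (s := S1) (f := fun y => f y - f x)
      rw [hcardS1] at h6
      exact_mod_cast h6
    have hc2' : (2 : ℝ) ≤ (c : ℝ) := by exact_mod_cast hc2
    have hprod : 0 ≤ (2 * (c : ℝ) - 4)
        * ((d : ℝ) * (∑ y ∈ S1, (f y - f x) ^ 2) - (∑ y ∈ S1, (f y - f x)) ^ 2) :=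
      mul_nonneg (by linarith) (by linarith)
    have hQc : 0 ≤ (c : ℝ) * (-(2 * (d : ℝ)) * (∑ y ∈ S1, (f y - f x) ^ 2)
        + 2 * (∑ y ∈ S1, (f y - f x)) ^ 2
        + ∑ w ∈ W, ∑ y ∈ S1.filter (fun y => G.Adj y w),
            (f w - f x - 2 * (f y - f x)) ^ 2) := by
      nlinarith [hsum2, hprod]
    have hcpos : (0 : ℝ) < (c : ℝ) := by linarith
    have hQ : 0 ≤ -(2 * (d : ℝ)) * (∑ y ∈ S1, (f y - f x) ^ 2)
        + 2 * (∑ y ∈ S1, (f y - f x)) ^ 2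
        + ∑ w ∈ W, ∑ y ∈ S1.filter (fun y => G.Adj y w),
            (f w - f x - 2 * (f y - f x)) ^ 2 := by
      by_contra hneg
      push_neg at hneg
      nlinarith [mul_pos hcpos (neg_pos.mpr hneg)]
    linarith [hm, hga, hDswap, hQ]
  · intro K hK
    set f0 : V → ℝ := fun v => ((min (G.dist x v) 2 : ℕ) : ℝ) with hf0
    have h := hK f0
    have hf0x : f0 x = 0 := by simp [hf0, SimpleGraph.dist_self]
    have hf0y : ∀ y ∈ S1, f0 y = 1 := by
      intro y hy
      have hd : G.dist x y = 1 := SimpleGraph.dist_eq_one_iff_adj.mpr (hadjxy y hy)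
      simp [hf0, hd]
    have hf0w : ∀ y ∈ S1, ∀ w ∈ (G.neighborFinset y).erase x, f0 w = 2 := by
      intro y hy w hw
      have hwW : w ∈ W := Finset.mem_biUnion.mpr ⟨y, hy, hw⟩
      have hd : G.dist x w = 2 := hdistW w hwW
      simp [hf0, hd]
    have hs1 : ∑ y ∈ S1, (f0 y - f0 x) ^ 2 = (d : ℝ) := by
      have h7 : ∀ y ∈ S1, (f0 y - f0 x) ^ 2 = 1 := by
        intro y hy; rw [hf0y y hy, hf0x]; norm_num
      rw [Finset.sum_congr rfl h7, Finset.sum_const, nsmul_eq_mul, mul_one, hcardS1]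
    have hs2 : ∑ y ∈ S1, (f0 y - f0 x) = (d : ℝ) := by
      have h7 : ∀ y ∈ S1, (f0 y - f0 x) = 1 := by
        intro y hy; rw [hf0y y hy, hf0x]; norm_num
      rw [Finset.sum_congr rfl h7, Finset.sum_const, nsmul_eq_mul, mul_one, hcardS1]
    have hga : gammaOp G f0 f0 x = (d : ℝ) / 2 := by
      rw [Stmt18.gammaOp_self, ← hS1def, hs1]
    have hm := Stmt18.master G hreg f0 x
    rw [← hS1def] at hm
    have hs3 : ∑ y ∈ S1, ∑ w ∈ (G.neighborFinset y).erase x,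
        (f0 w - f0 x - 2 * (f0 y - f0 x)) ^ 2 = 0 := by
      apply Finset.sum_eq_zero; intro y hy
      apply Finset.sum_eq_zero; intro w hw
      rw [hf0w y hy w hw, hf0x, hf0y y hy]; norm_num
    rw [hs1, hs2, hs3] at hm
    have hG2 : gamma2Op G f0 x = (d : ℝ) := by linear_combination hm / 4
    rw [hga, hG2] at h
    have hd0 : (0 : ℝ) < (d : ℝ) := by exact_mod_cast Nat.lt_of_lt_of_le Nat.zero_lt_one hd1
    by_contra hgt
    push_neg at hgt
    have h8 := mul_lt_mul_of_pos_right hgt (by positivity : (0 : ℝ) < (d : ℝ) / 2)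
    nlinarith [h, h8]
end
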